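/- Let K/k be a field extension in characteristic 0 such that the fixed field of Aut(K/k) is k. Let V₀ be a finite-dimensional k-vector space and V = V₀ ⊗_k K, with the semilinear Aut(K/k)-action σ(v₀ ⊗ a) = v₀ ⊗ σ(a). Then a K-subspace W of V is Aut(K/k)-invariant if and only if there exists a k-subspace W₀ of V₀ with W = W₀ ⊗_k K; in that case W₀ = W ∩ V₀. -/

import Mathlib

open TensorProduct

section Aux

variable {k K V₀ : Type*} [Field k] [Field K] [Algebra k K]
  [AddCommGroup V₀] [Module k V₀]

/-- The semilinear action on pure tensors. -/
lemma aux_T_tmul (σ : K ≃ₐ[k] K) (a : K) (v : V₀) :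
    TensorProduct.map σ.toLinearMap LinearMap.id (a ⊗ₜ[k] v) = σ a ⊗ₜ[k] v := rfl

lemma aux_T_smul (σ : K ≃ₐ[k] K) (c : K) (x : K ⊗[k] V₀) :
    TensorProduct.map σ.toLinearMap LinearMap.id (c • x) =
      σ c • TensorProduct.map σ.toLinearMap LinearMap.id x := by
  induction x using TensorProduct.induction_on with
  | zero => simp
  | tmul a v =>
      rw [smul_tmul', aux_T_tmul, aux_T_tmul, smul_tmul', smul_eq_mul, smul_eq_mul, map_mul]
  | add x y hx hy =>
      rw [smul_add, map_add, hx, hy, map_add, smul_add]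

lemma aux_T_repr {ι : Type*} (b : Module.Basis ι k V₀) (σ : K ≃ₐ[k] K) (x : K ⊗[k] V₀) (i : ι) :
    (b.baseChange K).repr (TensorProduct.map σ.toLinearMap LinearMap.id x) i =
      σ ((b.baseChange K).repr x i) := by
  induction x using TensorProduct.induction_on with
  | zero => simp
  | tmul a v =>
      rw [aux_T_tmul, Module.Basis.baseChange_repr_tmul, Module.Basis.baseChange_repr_tmul,
        Algebra.smul_def, Algebra.smul_def, map_mul, AlgEquiv.commutes]
  | add x y hx hy => simp [hx, hy]

/-- `1 ⊗ v = 0` implies `v = 0`. -/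
lemma aux_one_tmul_eq_zero (v : V₀) (h : (1 : K) ⊗ₜ[k] v = 0) : v = 0 := by
  let b := Module.Basis.ofVectorSpace k V₀
  have hrepr : ∀ i, b.repr v i = 0 := by
    intro i
    have : (b.baseChange K).repr ((1 : K) ⊗ₜ[k] v) i = 0 := by rw [h]; simp
    rw [Module.Basis.baseChange_repr_tmul, Algebra.smul_def, mul_one] at this
    exact (map_eq_zero_iff _ (algebraMap k K).injective).mp this
  have : b.repr v = 0 := Finsupp.ext hrepr
  simpa using congrArg b.repr.symm this

/-- Membership descends: `1 ⊗ v ∈ W₀.baseChange K → v ∈ W₀`. -/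
lemma aux_mem_of_one_tmul (W₀ : Submodule k V₀) (v : V₀)
    (h : (1 : K) ⊗ₜ[k] v ∈ W₀.baseChange K) : v ∈ W₀ := by
  obtain ⟨U₀, hU⟩ := Submodule.exists_isCompl W₀
  set π : V₀ →ₗ[k] V₀ := W₀.subtype.comp (W₀.linearProjOfIsCompl U₀ hU) with hπ
  have hπW : ∀ w ∈ W₀, π w = w := by
    intro w hw
    simp [hπ, Submodule.linearProjOfIsCompl_apply_left hU ⟨w, hw⟩]
    exact congrArg Subtype.val (Submodule.linearProjOfIsCompl_apply_left hU ⟨w, hw⟩)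
  set Mp : V₀ →ₗ[k] V₀ := LinearMap.id - π with hMp
  have hker : W₀.baseChange K ≤ LinearMap.ker (Mp.baseChange K) := by
    rw [Submodule.baseChange_eq_span, Submodule.span_le]
    rintro - ⟨w, hw, rfl⟩
    simp only [SetLike.mem_coe, LinearMap.mem_ker, TensorProduct.mk_apply,
      LinearMap.baseChange_tmul]
    rw [hMp, LinearMap.sub_apply, LinearMap.id_apply, hπW w hw, sub_self, TensorProduct.tmul_zero]
  have h0 : (Mp.baseChange K) ((1 : K) ⊗ₜ[k] v) = 0 := hker h
  rw [LinearMap.baseChange_tmul] at h0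
  have hv : v - π v = 0 := by
    apply aux_one_tmul_eq_zero (k := k) (K := K)
    simpa [hMp] using h0
  have : v = π v := by rw [← sub_eq_zero]; exact hv
  rw [this, hπ]
  exact (W₀.linearProjOfIsCompl U₀ hU v).2

end Aux

/-- Galois descent for subspaces: if K/k has K^{Aut(K/k)} = k and V = K ⊗_k V₀ with
the semilinear Aut(K/k)-action on the first factor, then a K-subspace W of V is
invariant iff it is of the form W₀ ⊗_k K, and then W₀ = W ∩ V₀. -/
theorem stmt_10 (k K V₀ : Type*) [Field k] [Field K] [Algebra k K] [CharZero K]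
    [AddCommGroup V₀] [Module k V₀] [FiniteDimensional k V₀]
    (hfix : ∀ x : K, (∀ σ : K ≃ₐ[k] K, σ x = x) → ∃ y : k, algebraMap k K y = x)
    (W : Submodule K (K ⊗[k] V₀)) :
    ((∀ (σ : K ≃ₐ[k] K) (w : K ⊗[k] V₀), w ∈ W →
        TensorProduct.map σ.toLinearMap LinearMap.id w ∈ W) ↔
      ∃ W₀ : Submodule k V₀, W = W₀.baseChange K) ∧
    ∀ W₀ : Submodule k V₀, W = W₀.baseChange K →
      ∀ v₀ : V₀, v₀ ∈ W₀ ↔ (1 : K) ⊗ₜ[k] v₀ ∈ W := by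
  constructor
  · constructor
    · -- hard direction
      intro hinv
      -- W₀ = {v : 1 ⊗ v ∈ W}
      set W₀ : Submodule k V₀ :=
        (W.restrictScalars k).comap ((TensorProduct.mk k K V₀) 1) with hW₀
      have hmemW₀ : ∀ v : V₀, v ∈ W₀ ↔ (1 : K) ⊗ₜ[k] v ∈ W := fun v => Iff.rfl
      refine ⟨W₀, le_antisymm ?_ ?_⟩
      · -- W ≤ W₀.baseChange K : the descent argument
        set b := Module.finBasis k V₀ with hb
        set bK := b.baseChange K with hbK
        -- complement machinery
        obtain ⟨U₀, hU⟩ := Submodule.exists_isCompl W₀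
        set π : V₀ →ₗ[k] V₀ := W₀.subtype.comp (W₀.linearProjOfIsCompl U₀ hU) with hπ
        have hπW : ∀ w ∈ W₀, π w = w := by
          intro w hw
          simp [hπ, Submodule.linearProjOfIsCompl_apply_left hU ⟨w, hw⟩]
          exact congrArg Subtype.val (Submodule.linearProjOfIsCompl_apply_left hU ⟨w, hw⟩)
        set Mp : V₀ →ₗ[k] V₀ := LinearMap.id - π with hMp
        have hker : W₀.baseChange K ≤ LinearMap.ker (Mp.baseChange K) := by
          rw [Submodule.baseChange_eq_span, Submodule.span_le]
          rintro - ⟨w, hw, rfl⟩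
          simp only [SetLike.mem_coe, LinearMap.mem_ker, TensorProduct.mk_apply,
            LinearMap.baseChange_tmul]
          rw [hMp, LinearMap.sub_apply, LinearMap.id_apply, hπW w hw, sub_self,
            TensorProduct.tmul_zero]
        have hπb : ∀ t : K ⊗[k] V₀, (π.baseChange K) t ∈ W₀.baseChange K := by
          intro t
          induction t using TensorProduct.induction_on with
          | zero => simp
          | tmul a v =>
              rw [LinearMap.baseChange_tmul]
              exact Submodule.tmul_mem_baseChange_of_mem a ((W₀.linearProjOfIsCompl U₀ hU v).2)
          | add x y hx hy => rw [map_add]; exact Submodule.add_mem _ hx hy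
        have hMb_eq : ∀ t : K ⊗[k] V₀, (Mp.baseChange K) t = t - (π.baseChange K) t := by
          intro t
          rw [hMp, LinearMap.baseChange_sub, LinearMap.baseChange_id]
          rfl
        have hWle : ∀ t : K ⊗[k] V₀, t ∈ W₀.baseChange K → t ∈ W := by
          intro t ht
          rw [Submodule.baseChange_eq_span] at ht
          refine Submodule.span_le.mpr ?_ ht
          rintro - ⟨w, hw, rfl⟩
          exact hw
        have hcomm : ∀ (σ : K ≃ₐ[k] K) (t : K ⊗[k] V₀),
            TensorProduct.map σ.toLinearMap LinearMap.id ((Mp.baseChange K) t) =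
              (Mp.baseChange K) (TensorProduct.map σ.toLinearMap LinearMap.id t) := by
          intro σ t
          induction t using TensorProduct.induction_on with
          | zero => simp
          | tmul a v => rw [LinearMap.baseChange_tmul, aux_T_tmul, aux_T_tmul,
              LinearMap.baseChange_tmul]
          | add x y hx hy => simp [hx, hy]
        -- main induction on support cardinality
        suffices H : ∀ N : ℕ, ∀ x : K ⊗[k] V₀, x ∈ W →
            ((bK.repr x).support.card ≤ N) → x ∈ W₀.baseChange K by
          intro x hx
          exact H ((bK.repr x).support.card) x hx le_rfl
        intro N
        induction N with
        | zero =>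
            intro x hx hcard
            have : bK.repr x = 0 := by
              ext i
              by_contra hne
              have : i ∈ (bK.repr x).support := Finsupp.mem_support_iff.mpr hne
              have := Finset.card_pos.mpr ⟨i, this⟩
              omega
            have : x = 0 := by
              have := congrArg bK.repr.symm this
              simpa using this
            rw [this]; exact Submodule.zero_mem _
        | succ N ih =>
            intro x hx hcard
            by_cases hc : (bK.repr x).support.card ≤ N
            · exact ih x hx hc
            · have hcard' : (bK.repr x).support.card = N + 1 := by omega
              have hne : (bK.repr x).support.Nonempty := by
                rw [← Finset.card_pos, hcard']; omega
              obtain ⟨i₀, hi₀⟩ := hne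
              set a : K := bK.repr x i₀ with ha
              have ha0 : a ≠ 0 := Finsupp.mem_support_iff.mp hi₀
              set y : K ⊗[k] V₀ := a⁻¹ • x with hy
              have hyW : y ∈ W := Submodule.smul_mem W a⁻¹ hx
              have hrepr_y : ∀ i, bK.repr y i = a⁻¹ * bK.repr x i := by
                intro i
                rw [hy, map_smul]
                rfl
              have hy₀ : bK.repr y i₀ = 1 := by
                rw [hrepr_y, ← ha, inv_mul_cancel₀ ha0]
              have hsupp_y : (bK.repr y).support ⊆ (bK.repr x).support := by
                intro i hi
                rw [Finsupp.mem_support_iff] at hi ⊢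
                intro h0
                exact hi (by rw [hrepr_y, h0, mul_zero])
              -- for each σ, the difference lies in W₀.baseChange K
              have hdiff : ∀ σ : K ≃ₐ[k] K,
                  TensorProduct.map σ.toLinearMap LinearMap.id y - y ∈ W₀.baseChange K := by
                intro σ
                have hmem : TensorProduct.map σ.toLinearMap LinearMap.id y - y ∈ W :=
                  Submodule.sub_mem W (hinv σ y hyW) hyW
                apply ih _ hmem
                have hsub : (bK.repr (TensorProduct.map σ.toLinearMap LinearMap.id y - y)).support
                    ⊆ (bK.repr x).support.erase i₀ := by
                  intro i hi
                  rw [Finsupp.mem_support_iff] at hi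
                  rw [map_sub, Finsupp.sub_apply, aux_T_repr] at hi
                  rw [Finset.mem_erase]
                  constructor
                  · rintro rfl
                    rw [hy₀] at hi
                    simp at hi
                  · by_contra hns
                    have : bK.repr y i = 0 := by
                      by_contra h0
                      exact hns (hsupp_y (Finsupp.mem_support_iff.mpr h0))
                    rw [this] at hi
                    simp at hi
                calc (bK.repr (TensorProduct.map σ.toLinearMap LinearMap.id y - y)).support.card
                    ≤ ((bK.repr x).support.erase i₀).card := Finset.card_le_card hsub
                  _ ≤ (bK.repr x).support.card - 1 := by
                      rw [Finset.card_erase_of_mem hi₀]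
                  _ ≤ N := by omega
              -- q := Mb y is fixed by all σ
              set q : K ⊗[k] V₀ := (Mp.baseChange K) y with hq
              have hqW : q ∈ W := by
                rw [hq, hMb_eq]
                exact Submodule.sub_mem W hyW (hWle _ (hπb y))
              have hqfix : ∀ σ : K ≃ₐ[k] K,
                  TensorProduct.map σ.toLinearMap LinearMap.id q = q := by
                intro σ
                rw [hq, hcomm]
                have : (Mp.baseChange K) (TensorProduct.map σ.toLinearMap LinearMap.id y - y)
                    = 0 := hker (hdiff σ)
                rw [map_sub] at this
                have := sub_eq_zero.mp this
                rw [this]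
              -- coordinates of q are fixed, hence in k
              have hcoord : ∀ i, ∃ c : k, algebraMap k K c = bK.repr q i := by
                intro i
                apply hfix
                intro σ
                rw [← aux_T_repr, hqfix σ]
              choose c hc using hcoord
              -- q = 1 ⊗ q₀
              set q₀ : V₀ := ∑ i, c i • b i with hq₀
              have hq_eq : q = (1 : K) ⊗ₜ[k] q₀ := by
                have h1 : q = ∑ i, bK.repr q i • bK i := (bK.sum_repr q).symm
                rw [h1, hq₀, TensorProduct.tmul_sum]
                apply Finset.sum_congr rfl
                intro i _
                rw [← hc i, hbK, Module.Basis.baseChange_apply, TensorProduct.tmul_smul,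
                  algebraMap_smul]
              have hq₀W₀ : q₀ ∈ W₀ := by
                rw [hmemW₀, ← hq_eq]
                exact hqW
              have hqW' : q ∈ W₀.baseChange K := by
                rw [hq_eq]
                exact Submodule.tmul_mem_baseChange_of_mem 1 hq₀W₀
              -- conclude
              have hyW' : y ∈ W₀.baseChange K := by
                have : y = (π.baseChange K) y + q := by
                  rw [hq, hMb_eq]; abel
                rw [this]
                exact Submodule.add_mem _ (hπb y) hqW'
              have : x = a • y := by
                rw [hy, smul_smul, mul_inv_cancel₀ ha0, one_smul]
              rw [this]
              exact Submodule.smul_mem _ a hyW'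
      · -- W₀.baseChange K ≤ W
        intro t ht
        rw [Submodule.baseChange_eq_span] at ht
        refine Submodule.span_le.mpr ?_ ht
        rintro - ⟨w, hw, rfl⟩
        exact hw
    · -- easy direction: base change is invariant
      rintro ⟨W₀, rfl⟩ σ w hw
      rw [Submodule.baseChange_eq_span] at hw ⊢
      induction hw using Submodule.span_induction with
      | mem x hx =>
          obtain ⟨v, hv, rfl⟩ := hx
          apply Submodule.subset_span
          refine ⟨v, hv, ?_⟩
          simp [aux_T_tmul]
      | zero => simp
      | add x y _ _ hx hy => rw [map_add]; exact Submodule.add_mem _ hx hy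
      | smul c x _ hx =>
          rw [aux_T_smul]
          exact Submodule.smul_mem _ _ hx
  · rintro W₀ rfl v₀
    constructor
    · exact fun h => Submodule.tmul_mem_baseChange_of_mem 1 h
    · exact aux_mem_of_one_tmul W₀ v₀
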